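/- If G is an asymmetric normally regular digraph with parameters (v,k,λ,μ) satisfying 2μ > k + λ, then the relation of non-adjacency is transitive on G, so G is group divisible (a complete multipartite tournament) and v − 2k divides v. -/

import Mathlib

open Matrix

/-- The v×v all-ones matrix over ℝ. -/
def allOnes (v : ℕ) : Matrix (Fin v) (Fin v) ℝ := Matrix.of fun _ _ => 1

/-- `A` is the adjacency matrix of a normally regular digraph with parameters
    `(v, k, l, m)` (i.e. `(v, k, λ, μ)`): a {0,1}-matrix with zero diagonal
    satisfying A·Aᵀ = k·I + λ·(A + Aᵀ) + μ·(J − I − A − Aᵀ). -/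
def IsNRD (v : ℕ) (k l m : ℤ) (A : Matrix (Fin v) (Fin v) ℝ) : Prop :=
  (∀ i j, A i j = 0 ∨ A i j = 1) ∧ (∀ i, A i i = 0) ∧
    A * Aᵀ = (k : ℝ) • (1 : Matrix (Fin v) (Fin v) ℝ) + (l : ℝ) • (A + Aᵀ) +
      (m : ℝ) • (allOnes v - 1 - A - Aᵀ)

open Finset

section Helpers

variable {v : ℕ} {k l m : ℤ} {A : Matrix (Fin v) (Fin v) ℝ}


lemma nrd_entry (h : IsNRD v k l m A) (i j : Fin v) :
    ∑ t, A i t * A j t =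
      (k:ℝ) * (if i = j then 1 else 0) + (l:ℝ) * (A i j + A j i) +
        (m:ℝ) * (1 - (if i = j then 1 else 0) - A i j - A j i) := by
  have H := congrFun (congrFun h.2.2 i) j
  simp only [Matrix.mul_apply, Matrix.transpose_apply, Matrix.add_apply, Matrix.sub_apply,
    Matrix.smul_apply, Matrix.one_apply, allOnes, Matrix.of_apply, smul_eq_mul] at H
  rw [H]

lemma nrd_diag (h : IsNRD v k l m A) (i : Fin v) : ∑ t, A i t * A i t = (k:ℝ) := by
  have := nrd_entry h i i
  simp [h.2.1 i] at this
  linarith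

lemma nrd_rowsum (h : IsNRD v k l m A) (i : Fin v) : ∑ t, A i t = (k:ℝ) := by
  rw [← nrd_diag h i]
  apply Finset.sum_congr rfl
  intro t _
  rcases h.1 i t with h0 | h0 <;> rw [h0] <;> norm_num

lemma nrd_nonadj (h : IsNRD v k l m A) {i j : Fin v} (hij : i ≠ j)
    (h1 : A i j = 0) (h2 : A j i = 0) : ∑ t, A i t * A j t = (m:ℝ) := by
  have := nrd_entry h i j
  simp [hij, h1, h2] at this
  linarith

lemma nrd_adj (h : IsNRD v k l m A) {i j : Fin v} (hij : i ≠ j)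
    (hadj : A i j + A j i = 1) : ∑ t, A i t * A j t = (l:ℝ) := by
  have := nrd_entry h i j
  rw [if_neg hij, hadj] at this
  have h2 : 1 - (0:ℝ) - A i j - A j i = 0 := by linarith
  rw [h2] at this
  linarith

lemma adj_sum (h : IsNRD v k l m A)
    (hasym : ∀ i j, (A + Aᵀ) i j = 0 ∨ (A + Aᵀ) i j = 1)
    {i j : Fin v} (hne : ¬(A i j = 0 ∧ A j i = 0)) : A i j + A j i = 1 := by
  have H := hasym i j
  simp only [Matrix.add_apply, Matrix.transpose_apply] at H
  rcases H with H | H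
  · exfalso
    rcases h.1 i j with h1 | h1 <;> rcases h.1 j i with h2 | h2 <;>
      rw [h1, h2] at H <;> first | (exact hne ⟨h1, h2⟩) | norm_num at H
  · exact H

lemma nrd_transitive (h : IsNRD v k l m A)
    (hasym : ∀ i j, (A + Aᵀ) i j = 0 ∨ (A + Aᵀ) i j = 1)
    (hm : 2 * m > k + l) {i j p : Fin v} (hij : i ≠ j) (hjp : j ≠ p) (hip : i ≠ p)
    (h1 : A i j = 0 ∧ A j i = 0) (h2 : A j p = 0 ∧ A p j = 0) :
    A i p = 0 ∧ A p i = 0 := by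
  by_contra hc
  have hadj : A i p + A p i = 1 := adj_sum h hasym hc
  have s1 : ∑ t, A j t * A i t = (m:ℝ) := nrd_nonadj h hij.symm h1.2 h1.1
  have s2 : ∑ t, A j t * A p t = (m:ℝ) := nrd_nonadj h hjp h2.1 h2.2
  have s3 : ∑ t, A j t * A j t = (k:ℝ) := nrd_diag h j
  have s4 : ∑ t, A i t * A p t = (l:ℝ) := nrd_adj h hip hadj
  have key : ∑ t, (A j t * A i t + A j t * A p t - A j t * A j t - A i t * A p t) ≤ 0 := by
    apply Finset.sum_nonpos
    intro t _
    rcases h.1 j t with hy | hy <;> rcases h.1 i t with hx | hx <;>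
      rcases h.1 p t with hz | hz <;> rw [hx, hy, hz] <;> norm_num
  have keq : ∑ t, (A j t * A i t + A j t * A p t - A j t * A j t - A i t * A p t)
      = 2*(m:ℝ) - k - l := by
    simp only [Finset.sum_sub_distrib, Finset.sum_add_distrib, s1, s2, s3, s4]
    ring
  have hm' : (k:ℝ) + l < 2*m := by exact_mod_cast hm
  linarith [keq ▸ key]

lemma nrd_inreg (h : IsNRD v k l m A)
    (hasym : ∀ i j, (A + Aᵀ) i j = 0 ∨ (A + Aᵀ) i j = 1)
    (hm : 2 * m > k + l) (hvpos : 0 < v) :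
    ∀ i, ∑ t, A t i = (k:ℝ) := by
  classical
  have i0 : Fin v := ⟨0, hvpos⟩
  by_cases hA0 : ∀ i j, A i j = 0
  · intro i
    have hk0 : (k:ℝ) = 0 := by rw [← nrd_rowsum h i0]; simp [hA0]
    simp [hA0, hk0]
  push_neg at hA0
  obtain ⟨a, b, hab⟩ := hA0
  have hab1 : A a b = 1 := (h.1 a b).resolve_left hab
  have hane : a ≠ b := by rintro rfl; rw [h.2.1 a] at hab1; norm_num at hab1
  have hadjab : A a b + A b a = 1 := adj_sum h hasym (by rintro ⟨h1, _⟩; exact hab h1)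
  have hent : ∀ i j, (0:ℝ) ≤ A i j := by
    intro i j; rcases h.1 i j with h0 | h0 <;> rw [h0] <;> norm_num
  have hl0 : (0:ℝ) ≤ (l:ℝ) := by
    rw [← nrd_adj h hane hadjab]
    exact Finset.sum_nonneg fun t _ => mul_nonneg (hent a t) (hent b t)
  have hk1 : (1:ℝ) ≤ (k:ℝ) := by
    rw [← nrd_rowsum h a, ← hab1]
    exact Finset.single_le_sum (fun t _ => hent a t) (Finset.mem_univ b)
  have hm' : (k:ℝ) + l < 2*m := by exact_mod_cast hm
  have hM : (0:ℝ) < m := by linarith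
  set c : ℝ := (m:ℝ) - (l:ℝ) with hc
  set B : Matrix (Fin v) (Fin v) ℝ := A + c • (1 : Matrix (Fin v) (Fin v) ℝ) with hB
  set α : ℝ := (k:ℝ) - m + c^2 with halpha
  have hBBT : B * Bᵀ = α • (1 : Matrix (Fin v) (Fin v) ℝ) + (m:ℝ) • allOnes v := by
    have hT : Bᵀ = Aᵀ + c • (1 : Matrix (Fin v) (Fin v) ℝ) := by
      rw [hB]; simp [Matrix.transpose_add, Matrix.transpose_smul]
    rw [hB, hT, add_mul, mul_add, mul_add, h.2.2]
    simp only [Matrix.smul_mul, Matrix.mul_smul, Matrix.mul_one, Matrix.one_mul, smul_smul]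
    ext i j
    simp only [Matrix.add_apply, Matrix.sub_apply, Matrix.smul_apply, Matrix.one_apply,
      Matrix.transpose_apply, allOnes, Matrix.of_apply, smul_eq_mul]
    by_cases hij : i = j <;> simp [hij] <;> ring
  have hBBTentry : ∀ i j, ∑ t, B i t * B j t = α * (if i = j then 1 else 0) + m := by
    intro i j
    have H := congrFun (congrFun hBBT i) j
    simp only [Matrix.mul_apply, Matrix.transpose_apply, Matrix.add_apply, Matrix.smul_apply,
      Matrix.one_apply, allOnes, Matrix.of_apply, smul_eq_mul, mul_one] at H
    rw [H]
  have eaa : ∑ t, B a t * B a t = α + m := by have := hBBTentry a a; simpa using this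
  have ebb : ∑ t, B b t * B b t = α + m := by have := hBBTentry b b; simpa using this
  have eab : ∑ t, B a t * B b t = m := by have := hBBTentry a b; simpa [hane] using this
  have hrowdiff : ∑ t, (B a t - B b t)^2 = 2*α := by
    have hsplit : ∑ t, (B a t - B b t)^2
        = (∑ t, B a t * B a t) + (∑ t, B b t * B b t) - 2 * ∑ t, B a t * B b t := by
      rw [Finset.mul_sum, ← Finset.sum_add_distrib, ← Finset.sum_sub_distrib]
      exact Finset.sum_congr rfl (by intros; ring)
    rw [hsplit, eaa, ebb, eab]; ring
  have hsqnn : (0:ℝ) ≤ ∑ t, (B a t - B b t)^2 :=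
    Finset.sum_nonneg fun t _ => sq_nonneg _
  have hαnonneg : 0 ≤ α := by linarith
  have hαpos : 0 < α := by
    rcases eq_or_lt_of_le hαnonneg with heq | hlt
    · exfalso
      have hz : ∀ t, B a t = B b t := by
        have hzero : ∑ t, (B a t - B b t)^2 = 0 := by rw [hrowdiff, ← heq]; ring
        intro t
        have := (Finset.sum_eq_zero_iff_of_nonneg (fun t _ => sq_nonneg (B a t - B b t))).mp
          hzero t (Finset.mem_univ t)
        have := sq_eq_zero_iff.mp this
        linarith
      have h1 : B a b = 1 := by
        simp [hB, Matrix.add_apply, Matrix.smul_apply, Matrix.one_apply, hane, hab1]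
      have h2 : B b b = c := by
        simp [hB, Matrix.add_apply, Matrix.smul_apply, Matrix.one_apply, h.2.1 b]
      have h3 : B a a = c := by
        simp [hB, Matrix.add_apply, Matrix.smul_apply, Matrix.one_apply, h.2.1 a]
      have h4 : B b a = A b a := by
        simp [hB, Matrix.add_apply, Matrix.smul_apply, Matrix.one_apply, hane.symm]
      have hc1 : c = 1 := by have := hz b; rw [h1, h2] at this; linarith
      have hba1 : A b a = 1 := by have := hz a; rw [h3, h4, hc1] at this; linarith
      rw [hab1, hba1] at hadjab; norm_num at hadjab
    · exact hlt
  -- Positive definiteness of B * Bᵀ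
  have hPD : (B * Bᵀ).PosDef := by
    rw [Matrix.posDef_iff_dotProduct_mulVec]
    constructor
    · have hH : Bᴴ = Bᵀ := by ext i j; simp [Matrix.conjTranspose_apply, Matrix.transpose_apply]
      have := Matrix.isHermitian_mul_conjTranspose_self B
      rwa [hH] at this
    · intro x hx
      have hmv : (B * Bᵀ) *ᵥ x = fun i => α * x i + m * ∑ j, x j := by
        rw [hBBT]
        funext i
        simp only [Matrix.mulVec, dotProduct, Matrix.add_apply, Matrix.smul_apply,
          Matrix.one_apply, allOnes, Matrix.of_apply, smul_eq_mul, mul_one]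
        rw [show (∑ j, ((α * if i = j then 1 else 0) + (m:ℝ)) * x j)
            = ∑ j, ((if i = j then α * x j else 0) + m * x j) from
          Finset.sum_congr rfl (fun t _ => by by_cases h' : i = t <;> simp [h'] <;> ring)]
        rw [Finset.sum_add_distrib, Finset.sum_ite_eq, ← Finset.mul_sum]
        simp
      have hstar : star x = x := by funext i; simp
      rw [hmv, hstar]
      have hdot : x ⬝ᵥ (fun i => α * x i + m * ∑ j, x j)
          = α * (∑ i, (x i)^2) + m * (∑ i, x i)^2 := by
        simp only [dotProduct]
        rw [show ∑ i, x i * (α * x i + m * ∑ j, x j)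
            = ∑ i, (α * (x i)^2 + (m * ∑ j, x j) * x i) from
          Finset.sum_congr rfl (fun i _ => by ring)]
        rw [Finset.sum_add_distrib, ← Finset.mul_sum, ← Finset.mul_sum]
        ring
      rw [hdot]
      obtain ⟨t0, ht0⟩ := Function.ne_iff.mp hx
      have hxt0 : (0:ℝ) < (x t0)^2 := lt_of_le_of_ne (sq_nonneg _) (Ne.symm (pow_ne_zero 2 ht0))
      have hQ : (0:ℝ) < ∑ i, (x i)^2 :=
        Finset.sum_pos' (fun i _ => sq_nonneg _) ⟨t0, Finset.mem_univ t0, hxt0⟩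
      nlinarith [sq_nonneg (∑ i, x i)]
  have hdet : IsUnit B.det := by
    have h1 : 0 < (B * Bᵀ).det := hPD.det_pos
    rw [Matrix.det_mul, Matrix.det_transpose] at h1
    exact isUnit_iff_ne_zero.mpr (fun h0 => by rw [h0] at h1; norm_num at h1)
  have hBinj : ∀ x y : Fin v → ℝ, B *ᵥ x = B *ᵥ y → x = y := by
    intro x y hxy
    have := congrArg (fun z => B⁻¹ *ᵥ z) hxy
    simpa [Matrix.mulVec_mulVec, Matrix.nonsing_inv_mul B hdet, Matrix.one_mulVec] using this
  set w : Fin v → ℝ := fun i => (∑ t, A t i) + c with hw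
  have hBone : B *ᵥ (fun _ => (1:ℝ)) = fun _ => (k:ℝ) + c := by
    funext i
    simp only [Matrix.mulVec, dotProduct, hB, Matrix.add_apply, Matrix.smul_apply,
      Matrix.one_apply, smul_eq_mul, mul_one, mul_ite, mul_zero]
    rw [Finset.sum_add_distrib, nrd_rowsum h i]
    simp [Finset.sum_ite_eq]
  have hBTone : Bᵀ *ᵥ (fun _ => (1:ℝ)) = w := by
    funext i
    simp only [Matrix.mulVec, dotProduct, Matrix.transpose_apply, hB, Matrix.add_apply,
      Matrix.smul_apply, Matrix.one_apply, smul_eq_mul, mul_one, mul_ite, mul_zero]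
    rw [Finset.sum_add_distrib]
    simp [hw, Finset.sum_ite_eq']
  have hBw : B *ᵥ w = fun _ => α + m * v := by
    rw [← hBTone, Matrix.mulVec_mulVec, hBBT]
    funext i
    simp only [Matrix.mulVec, dotProduct, Matrix.add_apply, Matrix.smul_apply,
      Matrix.one_apply, allOnes, Matrix.of_apply, smul_eq_mul, mul_one]
    rw [Finset.sum_add_distrib]
    simp [ite_mul, Finset.sum_ite_eq, Finset.card_univ, mul_comm]
  have hkc : (k:ℝ) + c ≠ 0 := by
    intro h0
    have h1 : B *ᵥ (fun _ => (1:ℝ)) = B *ᵥ (0 : Fin v → ℝ) := by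
      rw [hBone, Matrix.mulVec_zero]; funext _; exact h0
    have h2 := congrFun (hBinj _ _ h1) i0
    norm_num at h2
  have hkey : ((k:ℝ) + c) • w = (α + m * v) • (fun _ => (1:ℝ)) := by
    apply hBinj
    rw [Matrix.mulVec_smul, Matrix.mulVec_smul, hBw, hBone]
    funext i
    simp only [Pi.smul_apply, smul_eq_mul]
    ring
  have hcol : ∀ i, ∑ t, A t i = ∑ t, A t i0 := by
    intro i
    have hwi := congrFun hkey i
    have hwi0 := congrFun hkey i0
    simp only [Pi.smul_apply, smul_eq_mul] at hwi hwi0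
    have hmul := hwi.trans hwi0.symm
    have := mul_left_cancel₀ hkc hmul
    simpa [hw] using this
  intro i
  have htot : ∑ i', ∑ t, A t i' = (v:ℝ) * k := by
    rw [Finset.sum_comm]
    simp [nrd_rowsum h, Finset.card_univ, mul_comm]
  have h2 : ∑ i', ∑ t, A t i' = (v:ℝ) * (∑ t, A t i0) := by
    rw [Finset.sum_congr rfl fun i' _ => hcol i']
    simp [Finset.card_univ, mul_comm]
  have hv0 : ((v:ℝ)) ≠ 0 := ne_of_gt (by exact_mod_cast hvpos)
  have hveq : (∑ t, A t i0) = (k:ℝ) := mul_left_cancel₀ hv0 (h2.symm.trans htot)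
  rw [hcol i, hveq]
end Helpers

/-- In an asymmetric normally regular digraph with 2μ > k + λ, non-adjacency
    is a transitive relation, so the graph is group divisible and v − 2k
    divides v. -/
theorem stmt16 (v : ℕ) (k l m : ℤ) (A : Matrix (Fin v) (Fin v) ℝ)
    (h : IsNRD v k l m A)
    (hasym : ∀ i j, (A + Aᵀ) i j = 0 ∨ (A + Aᵀ) i j = 1)
    (hm : 2 * m > k + l) :
    (∀ i j p : Fin v, i ≠ j → j ≠ p → i ≠ p →
      (A i j = 0 ∧ A j i = 0) → (A j p = 0 ∧ A p j = 0) →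
      (A i p = 0 ∧ A p i = 0)) ∧
    ((v : ℤ) - 2 * k) ∣ (v : ℤ) := by
  classical
  refine ⟨fun i j p hij hjp hip h1 h2 => nrd_transitive h hasym hm hij hjp hip h1 h2, ?_⟩
  rcases Nat.eq_zero_or_pos v with hv0 | hvpos
  · subst hv0; simp
  have i0 : Fin v := ⟨0, hvpos⟩
  have hdvec := nrd_inreg h hasym hm hvpos
  set r : Fin v → Fin v → Prop := fun i j => i = j ∨ (A i j = 0 ∧ A j i = 0) with hr
  have hrrefl : ∀ i, r i i := fun i => Or.inl rfl
  have hrsymm : ∀ {i j}, r i j → r j i := by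
    rintro i j (rfl | ⟨ha, hb⟩)
    · exact Or.inl rfl
    · exact Or.inr ⟨hb, ha⟩
  have hrtrans : ∀ {i j p}, r i j → r j p → r i p := by
    rintro i j p hij hjp
    rcases hij with rfl | ⟨ha, hb⟩
    · exact hjp
    rcases hjp with rfl | ⟨hc, hd⟩
    · exact Or.inr ⟨ha, hb⟩
    by_cases hij' : i = j
    · subst hij'; exact Or.inr ⟨hc, hd⟩
    by_cases hjp' : j = p
    · subst hjp'; exact Or.inr ⟨ha, hb⟩
    by_cases hip' : i = p
    · exact Or.inl hip'
    · exact Or.inr (nrd_transitive h hasym hm hij' hjp' hip' ⟨ha, hb⟩ ⟨hc, hd⟩)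
  set S : Fin v → Finset (Fin v) := fun i => Finset.univ.filter (r i) with hS
  have hcardS : ∀ i, ((S i).card : ℝ) = (v:ℝ) - 2*(k:ℝ) := by
    intro i
    have hstep : ((S i).card : ℝ) = ∑ j, (1 - (A i j + A j i)) := by
      rw [hS]
      rw [Finset.card_filter]
      push_cast
      apply Finset.sum_congr rfl
      intro j _
      by_cases hji : r i j
      · rw [if_pos hji]
        rcases hji with rfl | ⟨ha, hb⟩
        · rw [h.2.1 i]; norm_num
        · rw [ha, hb]; norm_num
      · rw [if_neg hji]
        have hne : i ≠ j := fun he => hji (Or.inl he)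
        have hnot : ¬(A i j = 0 ∧ A j i = 0) := fun hq => hji (Or.inr hq)
        rw [adj_sum h hasym hnot]; norm_num
    rw [hstep, Finset.sum_sub_distrib, Finset.sum_add_distrib, nrd_rowsum h i, hdvec i]
    simp [Finset.card_univ]
    ring
  set n0 : ℕ := (S i0).card with hn0
  have hcards : ∀ i, (S i).card = n0 := by
    intro i
    have := (hcardS i).trans (hcardS i0).symm
    exact_mod_cast this
  have hn0pos : 0 < n0 := by
    rw [hn0]
    exact Finset.card_pos.mpr ⟨i0, Finset.mem_filter.mpr ⟨Finset.mem_univ i0, hrrefl i0⟩⟩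
  have key : ∀ n (V : Finset (Fin v)), V.card = n →
      (∀ i ∈ V, ∀ j, r i j → j ∈ V) → n0 ∣ V.card := by
    intro n
    induction n using Nat.strong_induction_on with
    | _ n ih =>
      intro V hVn hcl
      rcases V.eq_empty_or_nonempty with rfl | ⟨i, hi⟩
      · simp
      · have hsub : S i ⊆ V := fun j hj => hcl i hi j (Finset.mem_filter.mp hj).2
        have hcV : (V \ S i).card + n0 = V.card := by
          rw [← hcards i]; exact Finset.card_sdiff_add_card_eq_card hsub
        have hlt : (V \ S i).card < n := by omega
        have hcl' : ∀ a ∈ V \ S i, ∀ j, r a j → j ∈ V \ S i := by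
          intro a ha j hraj
          have haV := (Finset.mem_sdiff.mp ha).1
          have haS := (Finset.mem_sdiff.mp ha).2
          refine Finset.mem_sdiff.mpr ⟨hcl a haV j hraj, fun hjS => ?_⟩
          exact haS (Finset.mem_filter.mpr ⟨Finset.mem_univ a,
            hrtrans (Finset.mem_filter.mp hjS).2 (hrsymm hraj)⟩)
        have hdvd' := ih _ hlt (V \ S i) rfl hcl'
        rw [← hcV]
        exact dvd_add hdvd' dvd_rfl
  have hdvd : n0 ∣ v := by
    have := key (Finset.univ.card) Finset.univ rfl (fun i _ j _ => Finset.mem_univ j)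
    simpa using this
  have hn0z : (n0:ℤ) = (v:ℤ) - 2*k := by
    have h1 : ((n0:ℤ):ℝ) = (((v:ℤ) - 2*k : ℤ):ℝ) := by push_cast; exact hcardS i0
    exact_mod_cast h1
  rw [← hn0z]
  exact_mod_cast hdvd
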